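/- Anisotropic Young estimate for the single-layer heat potential: for 1 < q < ∞ and g ∈ L^q(ℝ^{n−1} × (0,T)), the function w(x,t) = ∫₀^t ∫_{ℝ^{n−1}} Γ(x'−y', x_n, t−s) g(y',s) dy' ds satisfies ‖w‖_{L^q(ℝⁿ₊ × (0,T))} ≤ c T^{1/(2q)+1/2} ‖g‖_{L^q(ℝ^{n−1} × (0,T))} for some constant depending on n, q (in particular ≤ c max{1,T} T^{1/(2q)} ‖g‖). -/

import Mathlib

open MeasureTheory Real
open scoped ENNReal

/-- The `(m+1)`-dimensional heat kernel evaluated at the spatial point `(z, x_n)`. -/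
noncomputable def heatKernelHalf (m : ℕ) (z : EuclideanSpace ℝ (Fin m)) (xn t : ℝ) : ℝ :=
  (4 * π * t) ^ (-((m : ℝ) + 1) / 2) * Real.exp (-(‖z‖ ^ 2 + xn ^ 2) / (4 * t))

lemma heatKernelHalf_nonneg (m : ℕ) (z : EuclideanSpace ℝ (Fin m)) (xn t : ℝ) (ht : 0 < t) :
    0 ≤ heatKernelHalf m z xn t := by
  have h4 : (0:ℝ) < 4 * π * t := by have := pi_pos; nlinarith
  exact mul_nonneg (Real.rpow_nonneg h4.le _) (Real.exp_nonneg _)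

lemma heatKernelHalf_symm (m : ℕ) (c u : EuclideanSpace ℝ (Fin m)) (xn t : ℝ) :
    heatKernelHalf m (c - u) xn t = heatKernelHalf m (u - c) xn t := by
  unfold heatKernelHalf; rw [norm_sub_rev]

lemma measurable_heatKernelHalf_aux (m : ℕ) :
    Measurable (fun r : (EuclideanSpace ℝ (Fin m) × ℝ × ℝ) =>
      heatKernelHalf m r.1 r.2.1 r.2.2) := by
  unfold heatKernelHalf
  apply Measurable.mul
  · exact (measurable_const.mul measurable_snd.snd).pow measurable_const
  · apply Real.measurable_exp.comp
    apply Measurable.div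
    · exact ((measurable_fst.norm.pow measurable_const).add
        (measurable_snd.fst.pow measurable_const)).neg
    · exact measurable_const.mul measurable_snd.snd

lemma integrable_gauss (m : ℕ) {b : ℝ} (hb : 0 < b) :
    Integrable (fun v : EuclideanSpace ℝ (Fin m) => rexp (-b * ‖v‖ ^ 2)) := by
  have h := (GaussianFourier.integrable_cexp_neg_mul_sq_norm_add
    (V := EuclideanSpace ℝ (Fin m)) (b := (b : ℂ)) (by simpa using hb) 0 0).norm
  simpa [Complex.norm_exp, ← Complex.ofReal_pow, neg_mul] using h

lemma lintegral_hk_layer (m : ℕ) (c : EuclideanSpace ℝ (Fin m)) (xn τ : ℝ) (hτ : 0 < τ) :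
    ∫⁻ u : EuclideanSpace ℝ (Fin m), ENNReal.ofReal (heatKernelHalf m (u - c) xn τ) =
      ENNReal.ofReal ((4 * π * τ) ^ (-(1:ℝ) / 2) * rexp (-(xn ^ 2) / (4 * τ))) := by
  have hπ := pi_pos
  have h4 : (0:ℝ) < 4 * π * τ := by nlinarith
  have hb : (0:ℝ) < (4 * τ)⁻¹ := by positivity
  have key : ∀ z : EuclideanSpace ℝ (Fin m), heatKernelHalf m z xn τ =
      ((4 * π * τ) ^ (-((m:ℝ) + 1) / 2) * rexp (-(xn ^ 2) / (4 * τ))) *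
        rexp (-(4 * τ)⁻¹ * ‖z‖ ^ 2) := by
    intro z
    unfold heatKernelHalf
    have he : rexp (-(‖z‖ ^ 2 + xn ^ 2) / (4 * τ)) =
        rexp (-(xn ^ 2) / (4 * τ)) * rexp (-(4 * τ)⁻¹ * ‖z‖ ^ 2) := by
      rw [← Real.exp_add]
      congr 1
      field_simp
      ring
    rw [he]
    ring
  have hint0 : Integrable (fun z : EuclideanSpace ℝ (Fin m) => heatKernelHalf m z xn τ) := by
    simp only [key]
    exact (integrable_gauss m hb).const_mul _
  have hint : Integrable (fun u : EuclideanSpace ℝ (Fin m) => heatKernelHalf m (u - c) xn τ) :=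
    hint0.comp_sub_right c
  have hnn : 0 ≤ᵐ[volume] fun u : EuclideanSpace ℝ (Fin m) => heatKernelHalf m (u - c) xn τ :=
    Filter.Eventually.of_forall fun u => heatKernelHalf_nonneg m _ xn τ hτ
  rw [← ofReal_integral_eq_lintegral_ofReal hint hnn]
  congr 1
  have h1 : ∫ u : EuclideanSpace ℝ (Fin m), heatKernelHalf m (u - c) xn τ =
      ∫ z : EuclideanSpace ℝ (Fin m), heatKernelHalf m z xn τ :=
    integral_sub_right_eq_self (μ := volume) (fun z => heatKernelHalf m z xn τ) c
  rw [h1]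
  simp only [key]
  rw [MeasureTheory.integral_const_mul, GaussianFourier.integral_rexp_neg_mul_sq_norm hb,
    finrank_euclideanSpace_fin]
  have h2 : π / (4 * τ)⁻¹ = 4 * π * τ := by field_simp
  rw [h2, mul_right_comm, ← Real.rpow_add h4,
    show -((m:ℝ) + 1) / 2 + (m:ℝ) / 2 = -(1:ℝ) / 2 by ring]

lemma lintegral_halfline (τ : ℝ) (hτ : 0 < τ) :
    ∫⁻ xn in Set.Ioi (0:ℝ),
      ENNReal.ofReal ((4 * π * τ) ^ (-(1:ℝ) / 2) * rexp (-(xn ^ 2) / (4 * τ))) =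
      ENNReal.ofReal (1 / 2) := by
  have hπ := pi_pos
  have h4 : (0:ℝ) < 4 * π * τ := by nlinarith
  have hb : (0:ℝ) < (4 * τ)⁻¹ := by positivity
  have hC : (0:ℝ) ≤ (4 * π * τ) ^ (-(1:ℝ) / 2) := Real.rpow_nonneg h4.le _
  have hrw : ∀ xn : ℝ, -(xn ^ 2) / (4 * τ) = -(4 * τ)⁻¹ * xn ^ 2 := by
    intro xn; field_simp
  simp_rw [hrw, ENNReal.ofReal_mul hC]
  rw [lintegral_const_mul' _ _ ENNReal.ofReal_ne_top]
  have hint : IntegrableOn (fun xn : ℝ => rexp (-(4 * τ)⁻¹ * xn ^ 2)) (Set.Ioi 0) volume :=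
    (integrable_exp_neg_mul_sq hb).integrableOn
  rw [← ofReal_integral_eq_lintegral_ofReal hint
      (Filter.Eventually.of_forall fun x => Real.exp_nonneg _)]
  rw [integral_gaussian_Ioi ((4 * τ)⁻¹), ← ENNReal.ofReal_mul hC]
  congr 1
  have h2 : π / (4 * τ)⁻¹ = 4 * π * τ := by field_simp
  rw [h2, Real.sqrt_eq_rpow, mul_div_assoc', ← Real.rpow_add h4]
  norm_num

lemma time_layer_bound (t : ℝ) (ht : 0 < t) (xn : ℝ) :
    ∫⁻ s in Set.Ioo 0 t,
      ENNReal.ofReal ((4 * π * (t - s)) ^ (-(1:ℝ) / 2) * rexp (-(xn ^ 2) / (4 * (t - s)))) ≤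
      ENNReal.ofReal (Real.sqrt t) := by
  have hπ := pi_pos
  have step1 : ∫⁻ s in Set.Ioo 0 t,
      ENNReal.ofReal ((4 * π * (t - s)) ^ (-(1:ℝ) / 2) * rexp (-(xn ^ 2) / (4 * (t - s)))) ≤
      ∫⁻ s in Set.Ioo 0 t,
      ENNReal.ofReal ((4 * π) ^ (-(1:ℝ) / 2) * (t - s) ^ (-(1:ℝ) / 2)) := by
    refine lintegral_mono_ae ?_
    filter_upwards [ae_restrict_mem measurableSet_Ioo] with s hs
    apply ENNReal.ofReal_le_ofReal
    have hts : (0:ℝ) < t - s := by have := hs.2; linarith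
    rw [Real.mul_rpow (by positivity) hts.le]
    have hexp : rexp (-(xn ^ 2) / (4 * (t - s))) ≤ 1 := by
      rw [Real.exp_le_one_iff]
      exact div_nonpos_of_nonpos_of_nonneg (neg_nonpos.2 (by positivity)) (by positivity)
    calc (4 * π) ^ (-(1:ℝ) / 2) * (t - s) ^ (-(1:ℝ) / 2) * rexp (-(xn ^ 2) / (4 * (t - s)))
        ≤ (4 * π) ^ (-(1:ℝ) / 2) * (t - s) ^ (-(1:ℝ) / 2) * 1 := by
          apply mul_le_mul_of_nonneg_left hexp
          positivity
      _ = (4 * π) ^ (-(1:ℝ) / 2) * (t - s) ^ (-(1:ℝ) / 2) := mul_one _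
  refine step1.trans ?_
  have hii0 : IntervalIntegrable (fun u : ℝ => u ^ (-(1:ℝ) / 2)) volume 0 t :=
    intervalIntegral.intervalIntegrable_rpow' (by norm_num)
  have hii : IntervalIntegrable (fun s : ℝ => (t - s) ^ (-(1:ℝ) / 2)) volume 0 t := by
    simpa using (hii0.comp_sub_left t).symm
  have hIoo : IntegrableOn (fun s : ℝ => (t - s) ^ (-(1:ℝ) / 2)) (Set.Ioo 0 t) volume :=
    (intervalIntegrable_iff_integrableOn_Ioo_of_le ht.le).1 hii
  have hint : IntegrableOn (fun s : ℝ => (4 * π) ^ (-(1:ℝ) / 2) * (t - s) ^ (-(1:ℝ) / 2))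
      (Set.Ioo 0 t) volume := hIoo.const_mul _
  have hnn : 0 ≤ᵐ[volume.restrict (Set.Ioo 0 t)]
      fun s : ℝ => (4 * π) ^ (-(1:ℝ) / 2) * (t - s) ^ (-(1:ℝ) / 2) := by
    filter_upwards [ae_restrict_mem measurableSet_Ioo] with s hs
    have hts : (0:ℝ) < t - s := by have := hs.2; linarith
    positivity
  rw [← ofReal_integral_eq_lintegral_ofReal hint hnn]
  apply ENNReal.ofReal_le_ofReal
  have hval : ∫ s in Set.Ioo 0 t, (t - s) ^ (-(1:ℝ) / 2) = 2 * Real.sqrt t := by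
    rw [← integral_Ioc_eq_integral_Ioo, ← intervalIntegral.integral_of_le ht.le,
      intervalIntegral.integral_comp_sub_left (fun u : ℝ => u ^ (-(1:ℝ) / 2)) t]
    simp only [sub_self, sub_zero]
    rw [integral_rpow (Or.inl (by norm_num))]
    rw [Real.zero_rpow (by norm_num)]
    rw [Real.sqrt_eq_rpow]
    norm_num
    ring
  rw [MeasureTheory.integral_const_mul, hval]
  have h2 : Real.sqrt 4 ≤ Real.sqrt (4 * π) := Real.sqrt_le_sqrt (by nlinarith [pi_gt_three])
  have h4 : Real.sqrt 4 = 2 := by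
    rw [show (4:ℝ) = 2 ^ 2 by norm_num, Real.sqrt_sq (by norm_num)]
  have hs4 : (0:ℝ) < Real.sqrt (4 * π) := Real.sqrt_pos.2 (by nlinarith)
  have hconst : (4 * π) ^ (-(1:ℝ) / 2) * 2 ≤ 1 := by
    rw [show (-(1:ℝ) / 2) = -(1/2 : ℝ) by norm_num, Real.rpow_neg (by positivity),
      ← Real.sqrt_eq_rpow]
    calc (Real.sqrt (4 * π))⁻¹ * 2 ≤ (Real.sqrt (4 * π))⁻¹ * Real.sqrt (4 * π) := by
          apply mul_le_mul_of_nonneg_left _ (by positivity)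
          rw [← h4]; exact h2
      _ = 1 := inv_mul_cancel₀ hs4.ne'
  calc (4 * π) ^ (-(1:ℝ) / 2) * (2 * Real.sqrt t) =
        ((4 * π) ^ (-(1:ℝ) / 2) * 2) * Real.sqrt t := by ring
    _ ≤ 1 * Real.sqrt t := mul_le_mul_of_nonneg_right hconst (Real.sqrt_nonneg _)
    _ = Real.sqrt t := one_mul _

set_option maxHeartbeats 2000000

/-- Anisotropic Young estimate for the single-layer heat potential: for `1 < q < ∞` and
`g ∈ L^q(ℝ^{n-1} × (0,T))`, the potential
`w(x,t) = ∫₀ᵗ ∫ Γ(x'-y', x_n, t-s) g(y',s) dy' ds` satisfies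
`‖w‖_{L^q(ℝⁿ₊×(0,T))} ≤ c T^{1/(2q)+1/2} ‖g‖_{L^q(ℝ^{n-1}×(0,T))}`. -/
theorem single_layer_heat_potential_estimate (m : ℕ) (q : ℝ) (hq : 1 < q) :
    ∃ c : ℝ, 0 < c ∧ ∀ (T : ℝ), 0 < T →
      ∀ g : EuclideanSpace ℝ (Fin m) × ℝ → ℝ,
      MemLp g (ENNReal.ofReal q)
        ((volume : Measure (EuclideanSpace ℝ (Fin m))).prod
          ((volume : Measure ℝ).restrict (Set.Ioo 0 T))) →
      eLpNorm (fun zt : (EuclideanSpace ℝ (Fin m) × ℝ) × ℝ =>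
          ∫ s in Set.Ioo (0 : ℝ) zt.2, ∫ y' : EuclideanSpace ℝ (Fin m),
            heatKernelHalf m (zt.1.1 - y') zt.1.2 (zt.2 - s) * g (y', s))
        (ENNReal.ofReal q)
        ((((volume : Measure (EuclideanSpace ℝ (Fin m))).prod
            ((volume : Measure ℝ).restrict (Set.Ioi 0)))).prod
          ((volume : Measure ℝ).restrict (Set.Ioo 0 T)))
      ≤ ENNReal.ofReal (c * T ^ (1 / (2 * q) + 1 / 2)) *
          eLpNorm g (ENNReal.ofReal q)
            ((volume : Measure (EuclideanSpace ℝ (Fin m))).prod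
              ((volume : Measure ℝ).restrict (Set.Ioo 0 T))) := by
  refine ⟨1, one_pos, fun T hT g hg => ?_⟩
  have hq0 : (0:ℝ) < q := by linarith
  have hq1 : (0:ℝ) < q - 1 := by linarith
  set p : ℝ≥0∞ := ENNReal.ofReal q with hpdef
  have hp0 : p ≠ 0 := by
    simp only [hpdef, ne_eq, ENNReal.ofReal_eq_zero, not_le]; exact hq0
  have hptop : p ≠ ∞ := ENNReal.ofReal_ne_top
  have hptoReal : p.toReal = q := ENNReal.toReal_ofReal hq0.le
  set q' : ℝ := q / (q - 1) with hq'def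
  have hconj : q'.HolderConjugate q := (Real.HolderConjugate.conjExponent hq).symm
  have hq'0 : (0:ℝ) < q' := hconj.pos
  have hsum : 1 / q' + 1 / q = 1 := by
    rw [one_div, one_div]; exact hconj.inv_add_inv_eq_one
  set ν : Measure (EuclideanSpace ℝ (Fin m) × ℝ) :=
    (volume : Measure (EuclideanSpace ℝ (Fin m))).prod
      ((volume : Measure ℝ).restrict (Set.Ioo 0 T)) with hνdef
  set μ : Measure ((EuclideanSpace ℝ (Fin m) × ℝ) × ℝ) :=
    ((volume : Measure (EuclideanSpace ℝ (Fin m))).prod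
      ((volume : Measure ℝ).restrict (Set.Ioi 0))).prod
      ((volume : Measure ℝ).restrict (Set.Ioo 0 T)) with hμdef
  set w : (EuclideanSpace ℝ (Fin m) × ℝ) × ℝ → ℝ := fun zt =>
    ∫ s in Set.Ioo (0 : ℝ) zt.2, ∫ y' : EuclideanSpace ℝ (Fin m),
      heatKernelHalf m (zt.1.1 - y') zt.1.2 (zt.2 - s) * g (y', s) with hwdef
  set G : EuclideanSpace ℝ (Fin m) × ℝ → ℝ≥0∞ := fun yp => (‖g yp‖₊ : ℝ≥0∞) with hGdef
  have hGae : AEMeasurable G ν := hg.1.enorm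
  set K : ((EuclideanSpace ℝ (Fin m) × ℝ) × ℝ) → (EuclideanSpace ℝ (Fin m) × ℝ) → ℝ≥0∞ :=
    fun x yp => if yp.2 < x.2
      then ENNReal.ofReal (heatKernelHalf m (x.1.1 - yp.1) x.1.2 (x.2 - yp.2)) else 0
    with hKdef
  have hKm : Measurable (fun r : ((EuclideanSpace ℝ (Fin m) × ℝ) × ℝ) ×
      (EuclideanSpace ℝ (Fin m) × ℝ) => K r.1 r.2) := by
    rw [hKdef]
    refine Measurable.ite (measurableSet_lt measurable_snd.snd measurable_fst.snd)
      ?_ measurable_const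
    exact ENNReal.measurable_ofReal.comp ((measurable_heatKernelHalf_aux m).comp
      ((measurable_fst.fst.fst.sub measurable_snd.fst).prodMk
        (measurable_fst.fst.snd.prodMk (measurable_fst.snd.sub measurable_snd.snd))))
  have hKx : ∀ x, Measurable (K x) := fun x => hKm.comp measurable_prodMk_left
  have hKyp : ∀ yp, Measurable (fun x => K x yp) := fun yp => hKm.comp measurable_prodMk_right
  -- restriction helpers
  have hres : ∀ t₀ : ℝ, 0 < t₀ → t₀ < T → ∀ f : ℝ → ℝ≥0∞,
      ∫⁻ s in Set.Ioo 0 T, (Set.Iio t₀).indicator f s = ∫⁻ s in Set.Ioo 0 t₀, f s := by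
    intro t₀ h0 hT' f
    rw [lintegral_indicator measurableSet_Iio, Measure.restrict_restrict measurableSet_Iio]
    congr 2
    ext s
    simp only [Set.mem_inter_iff, Set.mem_Iio, Set.mem_Ioo]
    constructor
    · rintro ⟨h1, h2, h3⟩; exact ⟨h2, h1⟩
    · rintro ⟨h1, h2⟩; exact ⟨h2, h1, by linarith⟩
  have hres' : ∀ s₀ : ℝ, 0 < s₀ → s₀ < T → ∀ f : ℝ → ℝ≥0∞,
      ∫⁻ t in Set.Ioo 0 T, (Set.Ioi s₀).indicator f t = ∫⁻ t in Set.Ioo s₀ T, f t := by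
    intro s₀ h0 hT' f
    rw [lintegral_indicator measurableSet_Ioi, Measure.restrict_restrict measurableSet_Ioi]
    congr 2
    ext t
    simp only [Set.mem_inter_iff, Set.mem_Ioi, Set.mem_Ioo]
    constructor
    · rintro ⟨h1, h2, h3⟩; exact ⟨h1, h3⟩
    · rintro ⟨h1, h2⟩; exact ⟨h1, by linarith, h2⟩
  have haeT : ∀ᵐ x ∂μ, x.2 ∈ Set.Ioo 0 T := by
    rw [ae_iff]
    have hset : {x : (EuclideanSpace ℝ (Fin m) × ℝ) × ℝ | ¬ x.2 ∈ Set.Ioo 0 T} =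
        Set.univ ×ˢ (Set.Ioo 0 T)ᶜ := by
      ext x; simp
    rw [hset, hμdef, Measure.prod_prod,
      Measure.restrict_apply measurableSet_Ioo.compl]
    simp
  have haeS : ∀ᵐ yp ∂ν, yp.2 ∈ Set.Ioo 0 T := by
    rw [ae_iff]
    have hset : {yp : EuclideanSpace ℝ (Fin m) × ℝ | ¬ yp.2 ∈ Set.Ioo 0 T} =
        Set.univ ×ˢ (Set.Ioo 0 T)ᶜ := by
      ext yp; simp
    rw [hset, hνdef, Measure.prod_prod,
      Measure.restrict_apply measurableSet_Ioo.compl]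
    simp
  -- Step A : pointwise domination of the potential by the kernel integral
  have hwle : ∀ᵐ x ∂μ, (‖w x‖₊ : ℝ≥0∞) ≤ ∫⁻ yp, K x yp * G yp ∂ν := by
    filter_upwards [haeT] with x hx
    obtain ⟨hx0, hxT⟩ := hx
    simp only [hwdef]
    calc (‖∫ s in Set.Ioo (0:ℝ) x.2, ∫ y' : EuclideanSpace ℝ (Fin m),
            heatKernelHalf m (x.1.1 - y') x.1.2 (x.2 - s) * g (y', s)‖₊ : ℝ≥0∞)
        ≤ ∫⁻ s in Set.Ioo (0:ℝ) x.2, ‖∫ y' : EuclideanSpace ℝ (Fin m),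
            heatKernelHalf m (x.1.1 - y') x.1.2 (x.2 - s) * g (y', s)‖₊ ∂volume :=
          enorm_integral_le_lintegral_enorm _
      _ ≤ ∫⁻ s in Set.Ioo (0:ℝ) x.2, ∫⁻ y' : EuclideanSpace ℝ (Fin m),
            ‖heatKernelHalf m (x.1.1 - y') x.1.2 (x.2 - s) * g (y', s)‖₊ ∂volume ∂volume :=
          lintegral_mono fun s => enorm_integral_le_lintegral_enorm _
      _ = ∫⁻ s in Set.Ioo (0:ℝ) x.2, ∫⁻ y' : EuclideanSpace ℝ (Fin m),
            ENNReal.ofReal (heatKernelHalf m (x.1.1 - y') x.1.2 (x.2 - s)) * G (y', s)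
            ∂volume ∂volume := by
          refine setLIntegral_congr_fun_ae measurableSet_Ioo
            (Filter.Eventually.of_forall fun s hs => ?_)
          refine lintegral_congr fun y' => ?_
          have hτ : 0 < x.2 - s := by have := hs.2; linarith
          rw [nnnorm_mul, ENNReal.coe_mul, ← enorm_eq_nnnorm,
            Real.enorm_eq_ofReal (heatKernelHalf_nonneg _ _ _ _ hτ)]
      _ = ∫⁻ s in Set.Ioo (0:ℝ) T, ∫⁻ y' : EuclideanSpace ℝ (Fin m),
            K x (y', s) * G (y', s) ∂volume ∂volume := by
          rw [← hres x.2 hx0 hxT (fun s => ∫⁻ y' : EuclideanSpace ℝ (Fin m),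
            ENNReal.ofReal (heatKernelHalf m (x.1.1 - y') x.1.2 (x.2 - s)) * G (y', s) ∂volume)]
          refine lintegral_congr fun s => ?_
          by_cases hs : s < x.2
          · rw [Set.indicator_of_mem (Set.mem_Iio.mpr hs)]
            refine lintegral_congr fun y' => ?_
            simp only [hKdef, if_pos hs]
          · rw [Set.indicator_of_notMem (by simpa using hs)]
            symm
            simp only [hKdef, if_neg hs, zero_mul, lintegral_zero]
      _ = ∫⁻ yp, K x yp * G yp ∂ν := by
          rw [hνdef]
          exact (lintegral_prod_symm _ ((hKx x).aemeasurable.mul hGae)).symm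
  -- Step B : pointwise Hölder (Schur-type splitting)
  have hHolder : ∀ x, (∫⁻ yp, K x yp * G yp ∂ν) ≤
      (∫⁻ yp, K x yp ∂ν) ^ (1 / q') * (∫⁻ yp, K x yp * G yp ^ q ∂ν) ^ (1 / q) := by
    intro x
    have h := ENNReal.lintegral_mul_le_Lp_mul_Lq ν hconj
      (f := fun yp => K x yp ^ (1 / q')) (g := fun yp => K x yp ^ (1 / q) * G yp)
      ((hKx x).pow measurable_const).aemeasurable
      (((hKx x).pow measurable_const).aemeasurable.mul hGae)
    have e1 : ∀ yp, K x yp ^ (1 / q') * (K x yp ^ (1 / q) * G yp) = K x yp * G yp := by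
      intro yp
      rw [← mul_assoc, ← ENNReal.rpow_add_of_nonneg _ _ (by positivity) (by positivity),
        hsum, ENNReal.rpow_one]
    have e2 : ∀ yp, (K x yp ^ (1 / q')) ^ q' = K x yp := by
      intro yp
      rw [← ENNReal.rpow_mul, one_div, inv_mul_cancel₀ hq'0.ne', ENNReal.rpow_one]
    have e3 : ∀ yp, (K x yp ^ (1 / q) * G yp) ^ q = K x yp * G yp ^ q := by
      intro yp
      rw [ENNReal.mul_rpow_of_nonneg _ _ hq0.le, ← ENNReal.rpow_mul, one_div,
        inv_mul_cancel₀ hq0.ne', ENNReal.rpow_one]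
    simpa only [Pi.mul_apply, e1, e2, e3] using h
  -- Step C : uniform bound for the kernel mass in (y', s)
  have hA : ∀ x : (EuclideanSpace ℝ (Fin m) × ℝ) × ℝ, x.2 ∈ Set.Ioo 0 T →
      (∫⁻ yp, K x yp ∂ν) ≤ ENNReal.ofReal (Real.sqrt T) := by
    intro x hx
    obtain ⟨hx0, hxT⟩ := hx
    have h1 : (∫⁻ yp, K x yp ∂ν) =
        ∫⁻ s in Set.Ioo (0:ℝ) T, ∫⁻ y' : EuclideanSpace ℝ (Fin m), K x (y', s) ∂volume := by
      rw [hνdef]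
      exact lintegral_prod_symm _ (hKx x).aemeasurable
    rw [h1]
    have h2 : ∫⁻ s in Set.Ioo (0:ℝ) T, ∫⁻ y' : EuclideanSpace ℝ (Fin m), K x (y', s) ∂volume =
        ∫⁻ s in Set.Ioo (0:ℝ) x.2,
          ENNReal.ofReal ((4 * π * (x.2 - s)) ^ (-(1:ℝ) / 2) *
            rexp (-(x.1.2 ^ 2) / (4 * (x.2 - s)))) := by
      rw [← hres x.2 hx0 hxT (fun s => ENNReal.ofReal ((4 * π * (x.2 - s)) ^ (-(1:ℝ) / 2) *
            rexp (-(x.1.2 ^ 2) / (4 * (x.2 - s)))))]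
      refine lintegral_congr fun s => ?_
      by_cases hs : s < x.2
      · rw [Set.indicator_of_mem (Set.mem_Iio.mpr hs)]
        have hτ : 0 < x.2 - s := by linarith
        have hk1 : ∀ y' : EuclideanSpace ℝ (Fin m), K x (y', s) =
            ENNReal.ofReal (heatKernelHalf m (y' - x.1.1) x.1.2 (x.2 - s)) := by
          intro y'
          simp only [hKdef, if_pos hs]
          rw [heatKernelHalf_symm]
        rw [lintegral_congr hk1, lintegral_hk_layer m x.1.1 x.1.2 (x.2 - s) hτ]
      · rw [Set.indicator_of_notMem (by simpa using hs)]
        simp only [hKdef, if_neg hs, lintegral_zero]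
    rw [h2]
    exact (time_layer_bound x.2 hx0 x.1.2).trans
      (ENNReal.ofReal_le_ofReal (Real.sqrt_le_sqrt hxT.le))
  -- Step D : uniform bound for the kernel mass in x
  have hB : ∀ᵐ yp ∂ν, (∫⁻ x, K x yp ∂μ) ≤ ENNReal.ofReal T := by
    filter_upwards [haeS] with yp hyp
    obtain ⟨hs0, hsT⟩ := hyp
    have m1 : Measurable fun x : (EuclideanSpace ℝ (Fin m) × ℝ) × ℝ => K x yp := hKyp yp
    have m2 : Measurable fun zx : EuclideanSpace ℝ (Fin m) × ℝ =>
        ∫⁻ t, K (zx, t) yp ∂((volume : Measure ℝ).restrict (Set.Ioo 0 T)) :=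
      Measurable.lintegral_prod_right' (f := fun r => K r yp) m1
    have h1 : (∫⁻ x, K x yp ∂μ) =
        ∫⁻ z : EuclideanSpace ℝ (Fin m), ∫⁻ xn in Set.Ioi (0:ℝ),
          ∫⁻ t in Set.Ioo (0:ℝ) T, K ((z, xn), t) yp ∂volume ∂volume ∂volume := by
      rw [hμdef, lintegral_prod _ m1.aemeasurable]
      exact lintegral_prod _ m2.aemeasurable
    rw [h1]
    have hswap1 : (∫⁻ z : EuclideanSpace ℝ (Fin m), ∫⁻ xn in Set.Ioi (0:ℝ),
        ∫⁻ t in Set.Ioo (0:ℝ) T, K ((z, xn), t) yp ∂volume ∂volume ∂volume) =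
        ∫⁻ xn in Set.Ioi (0:ℝ), ∫⁻ z : EuclideanSpace ℝ (Fin m),
          ∫⁻ t in Set.Ioo (0:ℝ) T, K ((z, xn), t) yp ∂volume ∂volume ∂volume :=
      lintegral_lintegral_swap m2.aemeasurable
    rw [hswap1]
    have hswap2 : ∀ xn : ℝ, (∫⁻ z : EuclideanSpace ℝ (Fin m),
        ∫⁻ t in Set.Ioo (0:ℝ) T, K ((z, xn), t) yp ∂volume ∂volume) =
        ∫⁻ t in Set.Ioo (0:ℝ) T, ∫⁻ z : EuclideanSpace ℝ (Fin m),
          K ((z, xn), t) yp ∂volume ∂volume := by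
      intro xn
      refine lintegral_lintegral_swap (Measurable.aemeasurable ?_)
      exact (hKyp yp).comp ((measurable_fst.prodMk measurable_const).prodMk measurable_snd)
    have hinner : ∀ xn : ℝ, (∫⁻ t in Set.Ioo (0:ℝ) T, ∫⁻ z : EuclideanSpace ℝ (Fin m),
          K ((z, xn), t) yp ∂volume ∂volume) =
        ∫⁻ t in Set.Ioo yp.2 T, ENNReal.ofReal ((4 * π * (t - yp.2)) ^ (-(1:ℝ) / 2) *
          rexp (-(xn ^ 2) / (4 * (t - yp.2)))) ∂volume := by
      intro xn
      rw [← hres' yp.2 hs0 hsT (fun t => ENNReal.ofReal ((4 * π * (t - yp.2)) ^ (-(1:ℝ) / 2) *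
          rexp (-(xn ^ 2) / (4 * (t - yp.2)))))]
      refine lintegral_congr fun t => ?_
      by_cases htc : yp.2 < t
      · rw [Set.indicator_of_mem (Set.mem_Ioi.mpr htc)]
        have hτ : 0 < t - yp.2 := by linarith
        have hk1 : ∀ z : EuclideanSpace ℝ (Fin m), K ((z, xn), t) yp =
            ENNReal.ofReal (heatKernelHalf m (z - yp.1) xn (t - yp.2)) := by
          intro z; simp only [hKdef, if_pos htc]
        rw [lintegral_congr hk1, lintegral_hk_layer m yp.1 xn (t - yp.2) hτ]
      · rw [Set.indicator_of_notMem (by simpa using htc)]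
        simp only [hKdef, if_neg htc, lintegral_zero]
    calc ∫⁻ xn in Set.Ioi (0:ℝ), ∫⁻ z : EuclideanSpace ℝ (Fin m),
          ∫⁻ t in Set.Ioo (0:ℝ) T, K ((z, xn), t) yp ∂volume ∂volume ∂volume
        = ∫⁻ xn in Set.Ioi (0:ℝ), ∫⁻ t in Set.Ioo yp.2 T,
            ENNReal.ofReal ((4 * π * (t - yp.2)) ^ (-(1:ℝ) / 2) *
              rexp (-(xn ^ 2) / (4 * (t - yp.2)))) ∂volume ∂volume :=
          lintegral_congr fun xn => (hswap2 xn).trans (hinner xn)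
      _ = ∫⁻ t in Set.Ioo yp.2 T, ∫⁻ xn in Set.Ioi (0:ℝ),
            ENNReal.ofReal ((4 * π * (t - yp.2)) ^ (-(1:ℝ) / 2) *
              rexp (-(xn ^ 2) / (4 * (t - yp.2)))) ∂volume ∂volume := by
          refine lintegral_lintegral_swap (Measurable.aemeasurable ?_)
          refine ENNReal.measurable_ofReal.comp ?_
          exact ((measurable_const.mul (measurable_snd.sub measurable_const)).pow
              measurable_const).mul (Real.measurable_exp.comp
              ((measurable_fst.pow measurable_const).neg.div
                (measurable_const.mul (measurable_snd.sub measurable_const))))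
      _ = ∫⁻ t in Set.Ioo yp.2 T, ENNReal.ofReal (1 / 2) ∂volume := by
          refine setLIntegral_congr_fun_ae measurableSet_Ioo
            (Filter.Eventually.of_forall fun t ht => ?_)
          exact lintegral_halfline (t - yp.2) (by linarith [ht.1])
      _ ≤ ENNReal.ofReal T := by
          rw [setLIntegral_const, Real.volume_Ioo, ← ENNReal.ofReal_mul (by norm_num)]
          exact ENNReal.ofReal_le_ofReal (by linarith)
  -- Assembly
  set Iq : ℝ≥0∞ := ∫⁻ yp, G yp ^ q ∂ν with hIdef
  have hΦle : (∫⁻ x, (∫⁻ yp, K x yp * G yp ^ q ∂ν) ∂μ) ≤ ENNReal.ofReal T * Iq := by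
    have hU : AEMeasurable (fun r : (((EuclideanSpace ℝ (Fin m) × ℝ) × ℝ) ×
        (EuclideanSpace ℝ (Fin m) × ℝ)) => K r.1 r.2 * G r.2 ^ q) (μ.prod ν) := by
      refine hKm.aemeasurable.mul ?_
      exact (hGae.comp_quasiMeasurePreserving Measure.quasiMeasurePreserving_snd).pow
        aemeasurable_const
    rw [lintegral_lintegral_swap hU]
    calc (∫⁻ yp, ∫⁻ x, K x yp * G yp ^ q ∂μ ∂ν)
        = ∫⁻ yp, (∫⁻ x, K x yp ∂μ) * G yp ^ q ∂ν :=
          lintegral_congr fun yp => lintegral_mul_const'' _ (hKyp yp).aemeasurable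
      _ ≤ ∫⁻ yp, ENNReal.ofReal T * G yp ^ q ∂ν := by
          refine lintegral_mono_ae ?_
          filter_upwards [hB] with yp h
          exact mul_le_mul_left h _
      _ = ENNReal.ofReal T * Iq := lintegral_const_mul' _ _ ENNReal.ofReal_ne_top
  have hW : ∀ᵐ x ∂μ, (‖w x‖₊ : ℝ≥0∞) ^ q ≤
      (ENNReal.ofReal (Real.sqrt T)) ^ (q / q') * (∫⁻ yp, K x yp * G yp ^ q ∂ν) := by
    filter_upwards [hwle, haeT] with x h1 h2
    calc (‖w x‖₊ : ℝ≥0∞) ^ q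
        ≤ ((∫⁻ yp, K x yp ∂ν) ^ (1 / q') * (∫⁻ yp, K x yp * G yp ^ q ∂ν) ^ (1 / q)) ^ q :=
          ENNReal.rpow_le_rpow (h1.trans (hHolder x)) hq0.le
      _ = ((∫⁻ yp, K x yp ∂ν) ^ (1 / q')) ^ q * (∫⁻ yp, K x yp * G yp ^ q ∂ν) := by
          rw [ENNReal.mul_rpow_of_nonneg _ _ hq0.le,
            ← ENNReal.rpow_mul (∫⁻ yp, K x yp * G yp ^ q ∂ν) (1 / q) q,
            one_div_mul_cancel hq0.ne', ENNReal.rpow_one]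
      _ ≤ ((ENNReal.ofReal (Real.sqrt T)) ^ (1 / q')) ^ q *
            (∫⁻ yp, K x yp * G yp ^ q ∂ν) := by
          apply mul_le_mul_left
          exact ENNReal.rpow_le_rpow (ENNReal.rpow_le_rpow (hA x h2) (by positivity)) hq0.le
      _ = (ENNReal.ofReal (Real.sqrt T)) ^ (q / q') * (∫⁻ yp, K x yp * G yp ^ q ∂ν) := by
          rw [← ENNReal.rpow_mul]
          congr 1
          rw [one_div, inv_mul_eq_div]
  have hmain : (∫⁻ x, (‖w x‖₊ : ℝ≥0∞) ^ q ∂μ) ≤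
      (ENNReal.ofReal (Real.sqrt T)) ^ (q / q') * (ENNReal.ofReal T * Iq) := by
    calc ∫⁻ x, (‖w x‖₊ : ℝ≥0∞) ^ q ∂μ
        ≤ ∫⁻ x, (ENNReal.ofReal (Real.sqrt T)) ^ (q / q') *
            (∫⁻ yp, K x yp * G yp ^ q ∂ν) ∂μ := lintegral_mono_ae hW
      _ = (ENNReal.ofReal (Real.sqrt T)) ^ (q / q') *
            ∫⁻ x, (∫⁻ yp, K x yp * G yp ^ q ∂ν) ∂μ :=
          lintegral_const_mul' _ _ (ENNReal.rpow_ne_top_of_nonneg (by positivity)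
            ENNReal.ofReal_ne_top)
      _ ≤ _ := mul_le_mul_right hΦle _
  rw [eLpNorm_eq_lintegral_rpow_enorm_toReal hp0 hptop, eLpNorm_eq_lintegral_rpow_enorm_toReal hp0 hptop,
    hptoReal]
  have hscal : (ENNReal.ofReal (Real.sqrt T)) ^ ((q / q') * (1 / q)) *
      (ENNReal.ofReal T) ^ (1 / q) = ENNReal.ofReal (1 * T ^ (1 / (2 * q) + 1 / 2)) := by
    rw [one_mul, ENNReal.ofReal_rpow_of_pos (Real.sqrt_pos.2 hT),
      ENNReal.ofReal_rpow_of_pos hT, ← ENNReal.ofReal_mul (by positivity)]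
    congr 1
    rw [Real.sqrt_eq_rpow, ← Real.rpow_mul hT.le, ← Real.rpow_add hT]
    congr 1
    rw [hq'def]
    field_simp
    ring
  show (∫⁻ x, (‖w x‖₊ : ℝ≥0∞) ^ q ∂μ) ^ (1 / q) ≤
      ENNReal.ofReal (1 * T ^ (1 / (2 * q) + 1 / 2)) * Iq ^ (1 / q)
  calc (∫⁻ x, (‖w x‖₊ : ℝ≥0∞) ^ q ∂μ) ^ (1 / q)
      ≤ ((ENNReal.ofReal (Real.sqrt T)) ^ (q / q') * (ENNReal.ofReal T * Iq)) ^ (1 / q) :=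
        ENNReal.rpow_le_rpow hmain (by positivity)
    _ = (ENNReal.ofReal (Real.sqrt T)) ^ ((q / q') * (1 / q)) *
        ((ENNReal.ofReal T) ^ (1 / q) * Iq ^ (1 / q)) := by
        rw [ENNReal.mul_rpow_of_nonneg _ _ (by positivity),
          ENNReal.mul_rpow_of_nonneg _ _ (by positivity), ← ENNReal.rpow_mul]
    _ = ((ENNReal.ofReal (Real.sqrt T)) ^ ((q / q') * (1 / q)) *
        (ENNReal.ofReal T) ^ (1 / q)) * Iq ^ (1 / q) := by ring
    _ = ENNReal.ofReal (1 * T ^ (1 / (2 * q) + 1 / 2)) * Iq ^ (1 / q) := by rw [hscal]
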